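/- Let G be a connected graph on n ≥ 2 vertices. For real α, with (^α 𝕄)_i = (Σ_j d_{ij}𝔻_jᵅ)/𝔻_iᵅ ordered nonincreasingly and T = min_{i≠j} d_{ij}𝔻_jᵅ/𝔻_iᵅ, one has ρ(𝔻(G)) ≥ ((^α 𝕄)_n − T + √(((^α 𝕄)_n + T)² + 4T·Σ_{k=1}^{n−1}((^α 𝕄)_k − (^α 𝕄)_n)))/2. -/

import Mathlib

open Matrix Finset Real

/-- Spectral radius: largest modulus of a complex eigenvalue (root of the
characteristic polynomial). -/
noncomputable def specRad {n : ℕ} (A : Matrix (Fin n) (Fin n) ℝ) : ℝ :=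
  (((A.map (Complex.ofReal)).charpoly.roots).map (fun z => ‖z‖)).foldr max 0

/-- Irreducibility of a nonnegative matrix. -/
def Irred {n : ℕ} (A : Matrix (Fin n) (Fin n) ℝ) : Prop :=
  ∀ i j : Fin n, ∃ k : ℕ, 0 < (A ^ k) i j
lemma charpoly_isRoot_of_eigen {n : ℕ} (M : Matrix (Fin n) (Fin n) ℂ) (μ : ℂ)
    (v : Fin n → ℂ) (hv : v ≠ 0) (h : M *ᵥ v = μ • v) : M.charpoly.IsRoot μ := by
  have hdet : (μ • (1 : Matrix (Fin n) (Fin n) ℂ) - M).det = 0 := by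
    rw [← Matrix.exists_mulVec_eq_zero_iff]
    refine ⟨v, hv, ?_⟩
    rw [Matrix.sub_mulVec, Matrix.smul_mulVec, Matrix.one_mulVec, h, sub_self]
  have : M.charpoly.eval μ = (μ • (1 : Matrix (Fin n) (Fin n) ℂ) - M).det := by
    rw [Matrix.charpoly, eval_det, matPolyEquiv_charmatrix]
    congr 1
    simp [Matrix.scalar, smul_eq_diagonal_mul]
  rw [Polynomial.IsRoot, this, hdet]

lemma foldr_max_ge (s : Multiset ℝ) (a : ℝ) (h : a ∈ s) : a ≤ s.foldr max 0 := by
  induction s using Multiset.induction_on with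
  | empty => simp at h
  | cons b s ih =>
    rw [Multiset.foldr_cons]
    rcases Multiset.mem_cons.mp h with rfl | h'
    · exact le_max_left _ _
    · exact le_trans (ih h') (le_max_right _ _)

lemma specRad_ge_rayleigh {n : ℕ} (hn : 0 < n) (A : Matrix (Fin n) (Fin n) ℝ)
    (hA : A.IsHermitian) (w : Fin n → ℝ) (f : ℝ) (hw : 0 < ∑ i, w i * w i)
    (h : f * (∑ i, w i * w i) ≤ ∑ i, w i * (A *ᵥ w) i) : f ≤ specRad A := by
  haveI : NeZero n := ⟨by omega⟩
  obtain ⟨i0, -, hi0⟩ := Finset.exists_max_image (Finset.univ : Finset (Fin n))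
    hA.eigenvalues ⟨⟨0, hn⟩, Finset.mem_univ _⟩
  set μ := hA.eigenvalues i0 with hμ
  set U : Matrix (Fin n) (Fin n) ℝ := (hA.eigenvectorUnitary : Matrix (Fin n) (Fin n) ℝ) with hU
  have hstar : star U = Uᵀ := by
    ext i j; simp [Matrix.star_eq_conjTranspose, Matrix.conjTranspose_apply]
  have hUU : U * star U = 1 := (Matrix.mem_unitaryGroup_iff).mp hA.eigenvectorUnitary.2
  set y : Fin n → ℝ := star U *ᵥ w with hy
  have hdot : ∀ z : Fin n → ℝ, w ⬝ᵥ (U *ᵥ z) = y ⬝ᵥ z := by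
    intro z
    rw [Matrix.dotProduct_mulVec, hy, hstar, Matrix.mulVec_transpose]
  have hAw : A *ᵥ w = U *ᵥ ((Matrix.diagonal hA.eigenvalues) *ᵥ y) := by
    conv_lhs => rw [hA.spectral_theorem]
    rw [Unitary.conjStarAlgAut_apply]
    rw [← Matrix.mulVec_mulVec, ← Matrix.mulVec_mulVec]
    have hdg : Matrix.diagonal (RCLike.ofReal ∘ hA.eigenvalues) = Matrix.diagonal hA.eigenvalues := by
      ext i j
      simp [Function.comp, Matrix.diagonal_apply]
    rw [hdg]
  have hyy : y ⬝ᵥ y = w ⬝ᵥ w := by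
    have := hdot y
    rw [hy, Matrix.mulVec_mulVec, hUU, Matrix.one_mulVec] at this
    exact this.symm
  have key : ∑ i, w i * (A *ᵥ w) i ≤ μ * ∑ i, w i * w i := by
    have e1 : ∑ i, w i * (A *ᵥ w) i = w ⬝ᵥ (A *ᵥ w) := rfl
    rw [e1, hAw, hdot]
    have e2 : y ⬝ᵥ ((Matrix.diagonal hA.eigenvalues) *ᵥ y) = ∑ i, hA.eigenvalues i * (y i * y i) := by
      simp only [dotProduct, Matrix.mulVec_diagonal]
      exact Finset.sum_congr rfl fun i _ => by ring
    rw [e2]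
    have e3 : ∑ i, hA.eigenvalues i * (y i * y i) ≤ ∑ i, μ * (y i * y i) := by
      apply Finset.sum_le_sum
      intro i _
      exact mul_le_mul_of_nonneg_right (hi0 i (Finset.mem_univ i)) (mul_self_nonneg _)
    calc ∑ i, hA.eigenvalues i * (y i * y i) ≤ ∑ i, μ * (y i * y i) := e3
      _ = μ * (y ⬝ᵥ y) := by simp [dotProduct, Finset.mul_sum]
      _ = μ * ∑ i, w i * w i := by rw [hyy]; rfl
  have hfμ : f ≤ μ := by
    have := le_trans h key
    exact le_of_mul_le_mul_right (by linarith [this]) hw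
  set v : Fin n → ℝ := ⇑(hA.eigenvectorBasis i0) with hv
  have hvne : v ≠ 0 := by
    intro h0
    exact hA.eigenvectorBasis.orthonormal.ne_zero i0 (by ext j; exact congrFun h0 j)
  have hAv : A *ᵥ v = μ • v := hA.mulVec_eigenvectorBasis i0
  set vC : Fin n → ℂ := fun i => (v i : ℂ) with hvC
  have hvCne : vC ≠ 0 := by
    intro h0
    apply hvne
    ext j
    have := congrFun h0 j
    simpa [hvC] using this
  have hMv : (A.map Complex.ofReal) *ᵥ vC = (μ : ℂ) • vC := by
    ext i
    have := congrFun hAv i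
    simp only [Matrix.mulVec, dotProduct, Pi.smul_apply, smul_eq_mul] at this ⊢
    simp only [Matrix.map_apply, hvC]
    exact_mod_cast congrArg (Complex.ofReal) this
  have hroot : (A.map Complex.ofReal).charpoly.IsRoot (μ : ℂ) :=
    charpoly_isRoot_of_eigen _ _ vC hvCne hMv
  have hmem : (μ : ℂ) ∈ (A.map Complex.ofReal).charpoly.roots := by
    rw [Polynomial.mem_roots']
    exact ⟨(A.map Complex.ofReal).charpoly_monic.ne_zero, hroot⟩
  have : ‖(μ : ℂ)‖ ≤ specRad A := by
    apply foldr_max_ge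
    exact Multiset.mem_map_of_mem _ hmem
  rw [Complex.norm_real, Real.norm_eq_abs] at this
  exact le_trans hfμ (le_trans (le_abs_self μ) this)

theorem stmt_15 {n : ℕ} (hn : 2 ≤ n) (G : SimpleGraph (Fin n)) (hconn : G.Connected)
    (α : ℝ) (D : Fin n → ℝ) (hD : ∀ i, D i = ∑ j, (G.dist i j : ℝ))
    (𝕄 : Fin n → ℝ)
    (h𝕄 : ∀ i, 𝕄 i = (∑ j, (G.dist i j : ℝ) * (D j) ^ α) / (D i) ^ α)
    (hord : ∀ i j : Fin n, i ≤ j → 𝕄 j ≤ 𝕄 i)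
    (T : ℝ)
    (hT : IsLeast {x | ∃ i j : Fin n, i ≠ j ∧ x = (G.dist i j : ℝ) * (D j) ^ α / (D i) ^ α} T) :
    specRad (Matrix.of fun i j : Fin n => (G.dist i j : ℝ)) ≥
      (𝕄 ⟨n - 1, by omega⟩ - T +
        Real.sqrt ((𝕄 ⟨n - 1, by omega⟩ + T) ^ 2 +
          4 * T * ∑ k ∈ Finset.Iio (⟨n - 1, by omega⟩ : Fin n),
            (𝕄 k - 𝕄 ⟨n - 1, by omega⟩))) / 2 := by
  haveI : Nontrivial (Fin n) := ⟨⟨0, by omega⟩, ⟨1, by omega⟩, by simp [Fin.ext_iff]⟩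
  set N : Fin n := ⟨n - 1, by omega⟩ with hN
  set A : Matrix (Fin n) (Fin n) ℝ := Matrix.of fun i j : Fin n => (G.dist i j : ℝ) with hA
  -- basic positivity
  have hDpos : ∀ i, 0 < D i := by
    intro i
    obtain ⟨j, hj⟩ := exists_ne i
    rw [hD i]
    apply Finset.sum_pos' (fun k _ => by positivity)
    exact ⟨j, Finset.mem_univ j, by exact_mod_cast hconn.pos_dist_of_ne (Ne.symm hj)⟩
  have hPpos : ∀ i, (0:ℝ) < (D i) ^ α := fun i => Real.rpow_pos_of_pos (hDpos i) α
  have hTpos : 0 < T := by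
    obtain ⟨i, j, hij, hTx⟩ := hT.1
    rw [hTx]
    have h0 : (0:ℝ) < (G.dist i j : ℝ) := by exact_mod_cast hconn.pos_dist_of_ne hij
    exact div_pos (mul_pos h0 (hPpos j)) (hPpos i)
  have hTle : ∀ i j : Fin n, i ≠ j → T * (D i) ^ α ≤ (G.dist i j : ℝ) * (D j) ^ α := by
    intro i j hij
    have h1 : T ≤ (G.dist i j : ℝ) * (D j) ^ α / (D i) ^ α := hT.2 ⟨i, j, hij, rfl⟩
    calc T * (D i) ^ α ≤ ((G.dist i j : ℝ) * (D j) ^ α / (D i) ^ α) * (D i) ^ α :=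
          mul_le_mul_of_nonneg_right h1 (hPpos i).le
      _ = (G.dist i j : ℝ) * (D j) ^ α := div_mul_cancel₀ _ (ne_of_gt (hPpos i))
  have hMmin : ∀ j, 𝕄 N ≤ 𝕄 j := by
    intro j
    have hj := j.isLt
    exact hord j N (Fin.le_def.mpr (by simp [hN]; omega))
  have hMN0 : 0 ≤ 𝕄 N := by
    rw [h𝕄 N]
    apply div_nonneg _ (hPpos N).le
    exact Finset.sum_nonneg fun j _ => mul_nonneg (by positivity) (hPpos j).le
  set S : ℝ := ∑ k ∈ Finset.Iio N, (𝕄 k - 𝕄 N) with hSdef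
  have hS0 : 0 ≤ S := Finset.sum_nonneg fun k _ => sub_nonneg.mpr (hMmin k)
  have hSall : ∑ j : Fin n, (𝕄 j - 𝕄 N) = S := by
    have huniv : (Finset.univ : Finset (Fin n)) = insert N (Finset.Iio N) := by
      ext j
      simp only [Finset.mem_univ, Finset.mem_insert, Finset.mem_Iio, true_iff]
      have hj := j.isLt
      rcases lt_or_eq_of_le (show j ≤ N from Fin.le_def.mpr (by simp [hN]; omega)) with h | h
      · exact Or.inr h
      · exact Or.inl h
    rw [huniv, Finset.sum_insert (by simp)]
    simp [hSdef]
  set R : ℝ := Real.sqrt ((𝕄 N + T) ^ 2 + 4 * T * S) with hRdef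
  have hRsq : R ^ 2 = (𝕄 N + T) ^ 2 + 4 * T * S := Real.sq_sqrt (by positivity)
  have hR0 : 0 ≤ R := Real.sqrt_nonneg _
  set f : ℝ := (𝕄 N - T + R) / 2 with hfdef
  have hfT : 0 < f + T := by
    have : f + T = (𝕄 N + T + R) / 2 := by rw [hfdef]; ring
    rw [this]
    nlinarith [hMN0, hTpos, hR0]
  have hquad : f ^ 2 - f * (𝕄 N - T) - T * (𝕄 N + S) = 0 := by
    have h2f : 2 * f - (𝕄 N - T) = R := by rw [hfdef]; ring
    linear_combination (2 * f - (𝕄 N - T) + R) / 4 * h2f + (1 / 4 : ℝ) * hRsq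
  set u : Fin n → ℝ := fun j => 1 + (𝕄 j - 𝕄 N) / (f + T) with hudef
  have hu1 : ∀ j, (1:ℝ) ≤ u j := by
    intro j
    rw [hudef]
    have : 0 ≤ (𝕄 j - 𝕄 N) / (f + T) := div_nonneg (sub_nonneg.mpr (hMmin j)) hfT.le
    linarith
  set w : Fin n → ℝ := fun j => (D j) ^ α * u j with hwdef
  have hwpos : ∀ j, 0 < w j := fun j => mul_pos (hPpos j) (lt_of_lt_of_le one_pos (hu1 j))
  -- row sums
  have hrow1 : ∀ i, ∑ j, (G.dist i j : ℝ) * (D j) ^ α = 𝕄 i * (D i) ^ α := by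
    intro i
    have h1 := h𝕄 i
    rw [eq_div_iff (ne_of_gt (hPpos i))] at h1
    linarith [h1]
  -- key row inequality
  have key : ∀ i, f * w i ≤ ∑ j, (G.dist i j : ℝ) * w j := by
    intro i
    have hrow2 : T * (D i) ^ α * (S - (𝕄 i - 𝕄 N)) ≤
        ∑ j, (G.dist i j : ℝ) * (D j) ^ α * (𝕄 j - 𝕄 N) := by
      have hsplit : ∑ j, (G.dist i j : ℝ) * (D j) ^ α * (𝕄 j - 𝕄 N)
          = ∑ j ∈ Finset.univ.erase i, (G.dist i j : ℝ) * (D j) ^ α * (𝕄 j - 𝕄 N) := by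
        rw [← Finset.add_sum_erase _ _ (Finset.mem_univ i)]
        simp [SimpleGraph.dist_self]
      have hsplit2 : ∑ j ∈ Finset.univ.erase i, T * (D i) ^ α * (𝕄 j - 𝕄 N)
          = T * (D i) ^ α * (S - (𝕄 i - 𝕄 N)) := by
        calc ∑ j ∈ Finset.univ.erase i, T * (D i) ^ α * (𝕄 j - 𝕄 N)
            = (∑ j, T * (D i) ^ α * (𝕄 j - 𝕄 N)) - T * (D i) ^ α * (𝕄 i - 𝕄 N) := by
              rw [← Finset.add_sum_erase _ _ (Finset.mem_univ i)]; ring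
          _ = T * (D i) ^ α * S - T * (D i) ^ α * (𝕄 i - 𝕄 N) := by
              rw [← Finset.mul_sum, hSall]
          _ = T * (D i) ^ α * (S - (𝕄 i - 𝕄 N)) := by ring
      rw [hsplit, ← hsplit2]
      apply Finset.sum_le_sum
      intro j hj
      have hji : j ≠ i := (Finset.mem_erase.mp hj).1
      exact mul_le_mul_of_nonneg_right (hTle i j (Ne.symm hji)) (sub_nonneg.mpr (hMmin j))
    have expand : ∑ j, (G.dist i j : ℝ) * w j
        = 𝕄 i * (D i) ^ α + (∑ j, (G.dist i j : ℝ) * (D j) ^ α * (𝕄 j - 𝕄 N)) / (f + T) := by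
      have hterm : ∀ j, (G.dist i j : ℝ) * w j
          = (G.dist i j : ℝ) * (D j) ^ α + ((G.dist i j : ℝ) * (D j) ^ α * (𝕄 j - 𝕄 N)) / (f + T) := by
        intro j
        rw [hwdef, hudef]
        field_simp
      rw [Finset.sum_congr rfl fun j _ => hterm j, Finset.sum_add_distrib, hrow1 i,
        ← Finset.sum_div]
    have hid : f * w i = 𝕄 i * (D i) ^ α + (T * (D i) ^ α * (S - (𝕄 i - 𝕄 N))) / (f + T) := by
      rw [hwdef, hudef]
      field_simp
      linear_combination ((D i) ^ α) * hquad
    rw [hid, expand]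
    exact add_le_add_right ((div_le_div_iff_of_pos_right hfT).mpr hrow2) _
  -- assemble Rayleigh hypothesis
  have hAH : A.IsHermitian := by
    ext i j
    simp only [hA, Matrix.conjTranspose_apply, Matrix.of_apply, star_trivial]
    norm_cast
    exact SimpleGraph.dist_comm
  have hwsum : 0 < ∑ i, w i * w i :=
    Finset.sum_pos (fun i _ => mul_pos (hwpos i) (hwpos i)) ⟨⟨0, by omega⟩, Finset.mem_univ _⟩
  have hray : f * (∑ i, w i * w i) ≤ ∑ i, w i * (A *ᵥ w) i := by
    rw [Finset.mul_sum]
    apply Finset.sum_le_sum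
    intro i _
    have hAwi : (A *ᵥ w) i = ∑ j, (G.dist i j : ℝ) * w j := rfl
    rw [hAwi]
    calc f * (w i * w i) = w i * (f * w i) := by ring
      _ ≤ w i * ∑ j, (G.dist i j : ℝ) * w j :=
          mul_le_mul_of_nonneg_left (key i) (hwpos i).le
  have := specRad_ge_rayleigh (by omega) A hAH w f hwsum hray
  exact this
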